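/- As ε → 0 one has the expansions 𝓘(ε) = (3/2)ε² + (3/4)ε³ + O(ε⁴), 𝓠(ε) = (3/2)ε² + (3/8)ε³ + O(ε⁴), and 𝓓(ε) = (3/2)ε² − (3/16)ε³ + O(ε⁴); that is, there exist constants C, ε₀ > 0 such that for all |ε| ≤ ε₀ each of the three differences |𝓘(ε) − ((3/2)ε² + (3/4)ε³)|, |𝓠(ε) − ((3/2)ε² + (3/8)ε³)|, |𝓓(ε) − ((3/2)ε² − (3/16)ε³)| is at most Cε⁴. -/

import Mathlib

open MeasureTheory Real Filter

noncomputable section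

/-- Partial derivative `∂ᵢ f`. -/
def pder (i : Fin 2) (f : (Fin 2 → ℝ) → ℝ) : (Fin 2 → ℝ) → ℝ :=
  fun x => fderiv ℝ f x (Pi.single i 1)

def dotp (a b : Fin 2 → ℝ) : ℝ := ∑ i, a i * b i

def kvec1 : Fin 2 → ℝ := ![1, 0]
def kvec2 : Fin 2 → ℝ := ![-(1/2), Real.sqrt 3 / 2]
def kvec3 : Fin 2 → ℝ := ![-(1/2), -(Real.sqrt 3 / 2)]

/-- The hexagonal profile `φ(x) = cos(k₁·x) + cos(k₂·x) + cos(k₃·x)`. -/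
def phiHex (x : Fin 2 → ℝ) : ℝ :=
  Real.cos (dotp kvec1 x) + Real.cos (dotp kvec2 x) + Real.cos (dotp kvec3 x)

def lvec1 : Fin 2 → ℝ := ![2 * π, 2 * π / Real.sqrt 3]
def lvec2 : Fin 2 → ℝ := ![0, 4 * π / Real.sqrt 3]

/-- Fundamental parallelogram `Ω = {s ℓ₁ + t ℓ₂ : 0 ≤ s, t < 1}`. -/
def Omega : Set (Fin 2 → ℝ) :=
  {y | ∃ s t : ℝ, 0 ≤ s ∧ s < 1 ∧ 0 ≤ t ∧ t < 1 ∧ y = s • lvec1 + t • lvec2}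

/-- The normalized Haar average `⟨G⟩ = (1/|Ω|) ∫_Ω G`, where `|Ω| = 8π²/√3`. -/
def haarAvg (G : (Fin 2 → ℝ) → ℝ) : ℝ :=
  (Real.sqrt 3 / (8 * π ^ 2)) * ∫ x in Omega, G x

/-- `|∇φ|²`. -/
def gradSq (x : Fin 2 → ℝ) : ℝ := ∑ i, (pder i phiHex x) ^ 2

/-- Hessian entry `(∇²φ)ᵢⱼ = ∂ᵢ∂ⱼφ`. -/
def hessHex (i j : Fin 2) (x : Fin 2 → ℝ) : ℝ := pder i (pder j phiHex) x

/-- `|∇²φ|² = Σ_{i,j} (∂ᵢ∂ⱼφ)²`. -/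
def hessSq (x : Fin 2 → ℝ) : ℝ := ∑ i, ∑ j, (hessHex i j x) ^ 2

/-- `|∇∇²φ|² = Σ_{i,j,k} (∂_k∂ᵢ∂ⱼφ)²`. -/
def thirdSq (x : Fin 2 → ℝ) : ℝ :=
  ∑ k, ∑ i, ∑ j, (pder k (pder i (pder j phiHex)) x) ^ 2

/-- `tr((∇²φ)³)`. -/
def trHess3 (x : Fin 2 → ℝ) : ℝ :=
  ∑ i, ∑ j, ∑ k, hessHex i j x * hessHex j k x * hessHex k i x

/-- `Z_ε = ⟨e^{εφ}⟩`. -/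
def Zt (ε : ℝ) : ℝ := haarAvg (fun x => Real.exp (ε * phiHex x))

/-- `𝓘(ε) = ⟨εφ e^{εφ}⟩ / Z_ε`. -/
def calIT (ε : ℝ) : ℝ :=
  haarAvg (fun x => ε * phiHex x * Real.exp (ε * phiHex x)) / Zt ε

/-- `𝓠(ε) = ⟨ε²|∇²φ|² e^{εφ}⟩ / Z_ε`. -/
def calQT (ε : ℝ) : ℝ :=
  haarAvg (fun x => ε ^ 2 * hessSq x * Real.exp (ε * phiHex x)) / Zt ε

/-- `𝓓(ε) = ⟨(ε²|∇∇²φ|² − 2ε³ tr((∇²φ)³)) e^{εφ}⟩ / Z_ε`. -/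
def calDT (ε : ℝ) : ℝ :=
  haarAvg (fun x => (ε ^ 2 * thirdSq x - 2 * ε ^ 3 * trHess3 x) * Real.exp (ε * phiHex x)) / Zt ε

namespace HexAux

/-- The continuous linear map `y ↦ dotp k y`. -/
def Dk (k : Fin 2 → ℝ) : (Fin 2 → ℝ) →L[ℝ] ℝ :=
  ∑ j, k j • (ContinuousLinearMap.proj j)

lemma Dk_apply (k v : Fin 2 → ℝ) : Dk k v = ∑ j, k j * v j := by
  simp [Dk, ContinuousLinearMap.sum_apply, ContinuousLinearMap.smul_apply, smul_eq_mul]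

lemma Dk_single (k : Fin 2 → ℝ) (i : Fin 2) : Dk k (Pi.single i 1) = k i := by
  rw [Dk_apply]
  fin_cases i <;> simp [Fin.sum_univ_two, Pi.single_apply]

lemma hasFDerivAt_dotp (k x : Fin 2 → ℝ) : HasFDerivAt (dotp k) (Dk k) x := by
  have : HasFDerivAt (fun y : Fin 2 → ℝ => ∑ j, k j * y j)
      (∑ j, k j • (ContinuousLinearMap.proj j : (Fin 2 → ℝ) →L[ℝ] ℝ)) x := by
    apply HasFDerivAt.fun_sum
    intro j _
    exact ((ContinuousLinearMap.proj j : (Fin 2 → ℝ) →L[ℝ] ℝ).hasFDerivAt).const_mul (k j)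
  exact this

lemma hasFDerivAt_cos_dotp (k x : Fin 2 → ℝ) :
    HasFDerivAt (fun y => Real.cos (dotp k y)) (-Real.sin (dotp k x) • Dk k) x :=
  (hasFDerivAt_dotp k x).cos

lemma hasFDerivAt_sin_dotp (k x : Fin 2 → ℝ) :
    HasFDerivAt (fun y => Real.sin (dotp k y)) (Real.cos (dotp k x) • Dk k) x :=
  (hasFDerivAt_dotp k x).sin

lemma pder_phi (j : Fin 2) :
    pder j phiHex = fun x =>
      -(kvec1 j * Real.sin (dotp kvec1 x) + kvec2 j * Real.sin (dotp kvec2 x)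
        + kvec3 j * Real.sin (dotp kvec3 x)) := by
  funext x
  have h : HasFDerivAt phiHex
      ((-Real.sin (dotp kvec1 x) • Dk kvec1 + -Real.sin (dotp kvec2 x) • Dk kvec2)
        + -Real.sin (dotp kvec3 x) • Dk kvec3) x :=
    ((hasFDerivAt_cos_dotp kvec1 x).add (hasFDerivAt_cos_dotp kvec2 x)).add
      (hasFDerivAt_cos_dotp kvec3 x)
  simp only [pder, h.fderiv]
  simp [Dk_single]
  ring

lemma pder_pder_phi (i j : Fin 2) :
    pder i (pder j phiHex) = fun x =>
      -(kvec1 i * kvec1 j * Real.cos (dotp kvec1 x) + kvec2 i * kvec2 j * Real.cos (dotp kvec2 x)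
        + kvec3 i * kvec3 j * Real.cos (dotp kvec3 x)) := by
  funext x
  rw [pder_phi]
  have h : HasFDerivAt (fun x =>
      -(kvec1 j * Real.sin (dotp kvec1 x) + kvec2 j * Real.sin (dotp kvec2 x)
        + kvec3 j * Real.sin (dotp kvec3 x)))
      (-(((kvec1 j • (Real.cos (dotp kvec1 x) • Dk kvec1)
        + kvec2 j • (Real.cos (dotp kvec2 x) • Dk kvec2))
        + kvec3 j • (Real.cos (dotp kvec3 x) • Dk kvec3)))) x := by
    apply HasFDerivAt.neg
    exact (((hasFDerivAt_sin_dotp kvec1 x).const_mul (kvec1 j)).add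
      ((hasFDerivAt_sin_dotp kvec2 x).const_mul (kvec2 j))).add
      ((hasFDerivAt_sin_dotp kvec3 x).const_mul (kvec3 j))
  simp only [pder, h.fderiv]
  simp [Dk_single]
  ring

lemma hessHex_eq (i j : Fin 2) (x : Fin 2 → ℝ) :
    hessHex i j x =
      -(kvec1 i * kvec1 j * Real.cos (dotp kvec1 x) + kvec2 i * kvec2 j * Real.cos (dotp kvec2 x)
        + kvec3 i * kvec3 j * Real.cos (dotp kvec3 x)) := by
  rw [hessHex, pder_pder_phi]

lemma pder3_phi (l i j : Fin 2) :
    pder l (pder i (pder j phiHex)) = fun x =>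
      kvec1 l * kvec1 i * kvec1 j * Real.sin (dotp kvec1 x)
        + kvec2 l * kvec2 i * kvec2 j * Real.sin (dotp kvec2 x)
        + kvec3 l * kvec3 i * kvec3 j * Real.sin (dotp kvec3 x) := by
  funext x
  rw [pder_pder_phi]
  have h : HasFDerivAt (fun x =>
      -(kvec1 i * kvec1 j * Real.cos (dotp kvec1 x) + kvec2 i * kvec2 j * Real.cos (dotp kvec2 x)
        + kvec3 i * kvec3 j * Real.cos (dotp kvec3 x)))
      (-((((kvec1 i * kvec1 j) • (-Real.sin (dotp kvec1 x) • Dk kvec1)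
        + (kvec2 i * kvec2 j) • (-Real.sin (dotp kvec2 x) • Dk kvec2))
        + (kvec3 i * kvec3 j) • (-Real.sin (dotp kvec3 x) • Dk kvec3)))) x := by
    apply HasFDerivAt.neg
    exact (((hasFDerivAt_cos_dotp kvec1 x).const_mul (kvec1 i * kvec1 j)).add
      ((hasFDerivAt_cos_dotp kvec2 x).const_mul (kvec2 i * kvec2 j))).add
      ((hasFDerivAt_cos_dotp kvec3 x).const_mul (kvec3 i * kvec3 j))
  simp only [pder, h.fderiv]
  simp [Dk_single]
  ring

end HexAux
namespace HexAux

lemma k1_0 : kvec1 0 = 1 := rfl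
lemma k1_1 : kvec1 1 = 0 := rfl
lemma k2_0 : kvec2 0 = -(1/2) := rfl
lemma k2_1 : kvec2 1 = Real.sqrt 3 / 2 := rfl
lemma k3_0 : kvec3 0 = -(1/2) := rfl
lemma k3_1 : kvec3 1 = -(Real.sqrt 3 / 2) := rfl

lemma sqrt3_sq : Real.sqrt 3 * Real.sqrt 3 = 3 := Real.mul_self_sqrt (by norm_num)

lemma hess00 (x : Fin 2 → ℝ) : hessHex 0 0 x =
    -(Real.cos (dotp kvec1 x) + Real.cos (dotp kvec2 x)/4 + Real.cos (dotp kvec3 x)/4) := by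
  rw [hessHex_eq, k1_0, k2_0, k3_0]; ring

lemma hess01 (x : Fin 2 → ℝ) : hessHex 0 1 x =
    Real.sqrt 3 / 4 * (Real.cos (dotp kvec2 x) - Real.cos (dotp kvec3 x)) := by
  rw [hessHex_eq, k1_0, k1_1, k2_0, k2_1, k3_0, k3_1]; ring

lemma hess10 (x : Fin 2 → ℝ) : hessHex 1 0 x =
    Real.sqrt 3 / 4 * (Real.cos (dotp kvec2 x) - Real.cos (dotp kvec3 x)) := by
  rw [hessHex_eq, k1_0, k1_1, k2_0, k2_1, k3_0, k3_1]; ring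

lemma hess11 (x : Fin 2 → ℝ) : hessHex 1 1 x =
    -(3/4) * (Real.cos (dotp kvec2 x) + Real.cos (dotp kvec3 x)) := by
  rw [hessHex_eq, k1_1, k2_1, k3_1]
  linear_combination (-(Real.cos (dotp kvec2 x) + Real.cos (dotp kvec3 x))/4) * sqrt3_sq

lemma hessSq_eq (x : Fin 2 → ℝ) : hessSq x =
    (Real.cos (dotp kvec1 x)^2 + Real.cos (dotp kvec2 x)^2 + Real.cos (dotp kvec3 x)^2)
    + (Real.cos (dotp kvec1 x) * Real.cos (dotp kvec2 x)
       + Real.cos (dotp kvec1 x) * Real.cos (dotp kvec3 x)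
       + Real.cos (dotp kvec2 x) * Real.cos (dotp kvec3 x)) / 2 := by
  simp only [hessSq, Fin.sum_univ_two, hess00, hess01, hess10, hess11]
  linear_combination ((Real.cos (dotp kvec2 x) - Real.cos (dotp kvec3 x))^2/8) * sqrt3_sq

lemma trHess3_eq (x : Fin 2 → ℝ) : trHess3 x =
    -(Real.cos (dotp kvec1 x)^3 + Real.cos (dotp kvec2 x)^3 + Real.cos (dotp kvec3 x)^3)
    - (3/4) * (Real.cos (dotp kvec1 x)^2 * Real.cos (dotp kvec2 x)
      + Real.cos (dotp kvec1 x)^2 * Real.cos (dotp kvec3 x)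
      + Real.cos (dotp kvec2 x)^2 * Real.cos (dotp kvec1 x)
      + Real.cos (dotp kvec2 x)^2 * Real.cos (dotp kvec3 x)
      + Real.cos (dotp kvec3 x)^2 * Real.cos (dotp kvec1 x)
      + Real.cos (dotp kvec3 x)^2 * Real.cos (dotp kvec2 x))
    + (3/4) * (Real.cos (dotp kvec1 x) * Real.cos (dotp kvec2 x) * Real.cos (dotp kvec3 x)) := by
  simp only [trHess3, Fin.sum_univ_two, hess00, hess01, hess10, hess11]
  linear_combination (3 * ((-(Real.cos (dotp kvec1 x) + Real.cos (dotp kvec2 x)/4 + Real.cos (dotp kvec3 x)/4)) + (-(3/4) * (Real.cos (dotp kvec2 x) + Real.cos (dotp kvec3 x)))) / 16 * (Real.cos (dotp kvec2 x) - Real.cos (dotp kvec3 x))^2) * sqrt3_sq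

lemma third000 (x : Fin 2 → ℝ) : pder 0 (pder 0 (pder 0 phiHex)) x =
    Real.sin (dotp kvec1 x) - (Real.sin (dotp kvec2 x) + Real.sin (dotp kvec3 x))/8 := by
  rw [pder3_phi, k1_0, k2_0, k3_0]; ring

end HexAux
namespace HexAux

lemma thirdSq_eq (x : Fin 2 → ℝ) : thirdSq x =
    (Real.sin (dotp kvec1 x)^2 + Real.sin (dotp kvec2 x)^2 + Real.sin (dotp kvec3 x)^2)
    - (Real.sin (dotp kvec1 x) * Real.sin (dotp kvec2 x)
       + Real.sin (dotp kvec1 x) * Real.sin (dotp kvec3 x)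
       + Real.sin (dotp kvec2 x) * Real.sin (dotp kvec3 x)) / 4 := by
  have q := sqrt3_sq
  simp only [thirdSq, Fin.sum_univ_two, pder3_phi, k1_0, k1_1, k2_0, k2_1, k3_0, k3_1]
  linear_combination (((12 + 3*(Real.sqrt 3 * Real.sqrt 3) + (Real.sqrt 3 * Real.sqrt 3)*(Real.sqrt 3 * Real.sqrt 3))/64) * (Real.sin (dotp kvec2 x) - Real.sin (dotp kvec3 x))^2 + (3*((Real.sqrt 3 * Real.sqrt 3)+3)/64) * (Real.sin (dotp kvec2 x) + Real.sin (dotp kvec3 x))^2) * q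

end HexAux
namespace HexAux

/-- The linear parametrization `(s,t) ↦ s ℓ₁ + t ℓ₂` as a continuous linear map. -/
def Amap : (Fin 2 → ℝ) →L[ℝ] (Fin 2 → ℝ) :=
  (ContinuousLinearMap.proj 0).smulRight lvec1 + (ContinuousLinearMap.proj 1).smulRight lvec2

lemma Amap_apply (y : Fin 2 → ℝ) : Amap y = y 0 • lvec1 + y 1 • lvec2 := rfl

def sq01 : Set (Fin 2 → ℝ) := {y | y 0 ∈ Set.Ico (0:ℝ) 1 ∧ y 1 ∈ Set.Ico (0:ℝ) 1}

lemma sq01_measurable : MeasurableSet sq01 := by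
  have : sq01 = (fun y : Fin 2 → ℝ => y 0) ⁻¹' (Set.Ico 0 1) ∩
      (fun y : Fin 2 → ℝ => y 1) ⁻¹' (Set.Ico 0 1) := rfl
  rw [this]
  exact ((measurable_pi_apply 0) measurableSet_Ico).inter
    ((measurable_pi_apply 1) measurableSet_Ico)

lemma sqrt3_pos : (0:ℝ) < Real.sqrt 3 := Real.sqrt_pos.mpr (by norm_num)

lemma lv1_0 : lvec1 0 = 2 * π := rfl
lemma lv1_1 : lvec1 1 = 2 * π / Real.sqrt 3 := rfl
lemma lv2_0 : lvec2 0 = 0 := rfl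
lemma lv2_1 : lvec2 1 = 4 * π / Real.sqrt 3 := rfl

lemma Omega_eq : Omega = Amap '' sq01 := by
  ext x
  constructor
  · rintro ⟨s, t, hs0, hs1, ht0, ht1, rfl⟩
    refine ⟨![s, t], ⟨⟨hs0, hs1⟩, ⟨ht0, ht1⟩⟩, ?_⟩
    rw [Amap_apply]; norm_num
  · rintro ⟨y, ⟨⟨h00, h01⟩, ⟨h10, h11⟩⟩, rfl⟩
    exact ⟨y 0, y 1, h00, h01, h10, h11, (Amap_apply y).symm⟩

lemma Amap_det : Amap.det = 8 * π^2 / Real.sqrt 3 := by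
  have h : (Amap : (Fin 2 → ℝ) →ₗ[ℝ] (Fin 2 → ℝ)) =
      Matrix.toLin' (Matrix.of ![![lvec1 0, lvec2 0], ![lvec1 1, lvec2 1]]) := by
    apply LinearMap.ext
    intro y
    funext i
    rw [Matrix.toLin'_apply]
    fin_cases i <;>
      simp [Amap_apply, Fin.sum_univ_two, Matrix.mulVec, dotProduct] <;> ring
  rw [ContinuousLinearMap.det, h, LinearMap.det_toLin', Matrix.det_fin_two]
  have h3 := sqrt3_sq
  have h3ne : Real.sqrt 3 ≠ 0 := ne_of_gt sqrt3_pos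
  simp only [Matrix.of_apply, Matrix.cons_val', Matrix.cons_val_zero, Matrix.cons_val_one,
    Matrix.head_cons, Matrix.empty_val', Matrix.cons_val_fin_one, Matrix.head_fin_const,
    lv1_0, lv1_1, lv2_0, lv2_1]
  field_simp
  ring

lemma Amap_inj : Function.Injective Amap := by
  intro y z h
  have h0 := congrFun h 0
  have h1 := congrFun h 1
  simp only [Amap_apply, Pi.add_apply, Pi.smul_apply, smul_eq_mul,
    lv1_0, lv1_1, lv2_0, lv2_1] at h0 h1
  have hy0 : y 0 = z 0 := by
    have hπ : (2:ℝ) * π ≠ 0 := by positivity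
    apply mul_right_cancel₀ hπ
    linarith
  have hy1 : y 1 = z 1 := by
    have h3ne : Real.sqrt 3 ≠ 0 := ne_of_gt sqrt3_pos
    rw [hy0] at h1
    have : y 1 * (4 * π / Real.sqrt 3) = z 1 * (4 * π / Real.sqrt 3) := by linarith
    have hne : (4:ℝ) * π / Real.sqrt 3 ≠ 0 := by
      apply div_ne_zero (by positivity) h3ne
    exact mul_right_cancel₀ hne this
  funext i
  fin_cases i
  · exact hy0
  · exact hy1

/-- Change of variables: the Haar average equals an iterated integral over `[0,1]²`. -/
lemma haar_param (g : (Fin 2 → ℝ) → ℝ) (hg : Continuous g) :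
    haarAvg g = ∫ s in (0:ℝ)..1, ∫ t in (0:ℝ)..1, g (s • lvec1 + t • lvec2) := by
  have hder : ∀ y ∈ sq01, HasFDerivWithinAt (fun y => Amap y) Amap sq01 y := fun y _ =>
    (Amap.hasFDerivAt).hasFDerivWithinAt
  have key := MeasureTheory.integral_image_eq_integral_abs_det_fderiv_smul
    (volume : Measure (Fin 2 → ℝ)) sq01_measurable hder (Amap_inj.injOn) g
  have hdet : |Amap.det| = 8 * π^2 / Real.sqrt 3 := by
    rw [Amap_det, abs_of_pos]
    positivity
  rw [haarAvg, Omega_eq]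
  simp only [hdet] at key
  rw [key]
  simp only [smul_eq_mul]
  rw [MeasureTheory.integral_const_mul]
  have hconst : Real.sqrt 3 / (8 * π ^ 2) * (8 * π ^ 2 / Real.sqrt 3) = 1 := by
    have h3ne : Real.sqrt 3 ≠ 0 := ne_of_gt sqrt3_pos
    field_simp
  rw [← mul_assoc, hconst, one_mul]
  -- now pass to ℝ × ℝ
  set g' : ℝ × ℝ → ℝ := fun p => g (p.1 • lvec1 + p.2 • lvec2) with hg'def
  have hg' : Continuous g' := by
    apply hg.comp
    exact ((continuous_fst.smul continuous_const).add (continuous_snd.smul continuous_const))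
  have hpre : sq01 = (MeasurableEquiv.finTwoArrow : (Fin 2 → ℝ) ≃ᵐ ℝ × ℝ) ⁻¹'
      ((Set.Ico (0:ℝ) 1) ×ˢ (Set.Ico (0:ℝ) 1)) := rfl
  have hcomp : ∀ x : Fin 2 → ℝ, g (Amap x) = g' ((MeasurableEquiv.finTwoArrow : (Fin 2 → ℝ) ≃ᵐ ℝ × ℝ) x) := by
    intro x
    simp only [hg'def, Amap_apply]
    rfl
  calc ∫ x in sq01, g (Amap x)
      = ∫ x in sq01, g' ((MeasurableEquiv.finTwoArrow : (Fin 2 → ℝ) ≃ᵐ ℝ × ℝ) x) := by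
        exact MeasureTheory.setIntegral_congr_fun sq01_measurable (fun x _ => hcomp x)
    _ = ∫ p in (Set.Ico (0:ℝ) 1) ×ˢ (Set.Ico (0:ℝ) 1), g' p := by
        rw [hpre]
        exact (MeasureTheory.volume_preserving_finTwoArrow ℝ).setIntegral_preimage_emb
          (MeasurableEquiv.measurableEmbedding _) g' _
    _ = ∫ s in Set.Ico (0:ℝ) 1, ∫ t in Set.Ico (0:ℝ) 1, g' (s, t) := by
        apply MeasureTheory.setIntegral_prod
        apply MeasureTheory.IntegrableOn.mono_set
          (hg'.continuousOn.integrableOn_compact (isCompact_Icc.prod isCompact_Icc))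
        exact Set.prod_mono Set.Ico_subset_Icc_self Set.Ico_subset_Icc_self
    _ = ∫ s in (0:ℝ)..1, ∫ t in (0:ℝ)..1, g (s • lvec1 + t • lvec2) := by
        rw [intervalIntegral.integral_of_le (by norm_num : (0:ℝ) ≤ 1),
          MeasureTheory.integral_Ioc_eq_integral_Ioo, ← MeasureTheory.integral_Ico_eq_integral_Ioo]
        apply MeasureTheory.setIntegral_congr_fun measurableSet_Ico
        intro s _
        show ∫ t in Set.Ico (0:ℝ) 1, g' (s, t) = ∫ t in (0:ℝ)..1, g (s • lvec1 + t • lvec2)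
        rw [intervalIntegral.integral_of_le (by norm_num : (0:ℝ) ≤ 1),
          MeasureTheory.integral_Ioc_eq_integral_Ioo, ← MeasureTheory.integral_Ico_eq_integral_Ioo]

end HexAux
namespace HexAux

lemma int_cos_c (c : ℝ) (hc : c ≠ 0) (h : Real.sin c = 0) :
    ∫ u in (0:ℝ)..1, Real.cos (c * u) = 0 := by
  rw [intervalIntegral.integral_comp_mul_left Real.cos hc]
  simp [h]

lemma int_sin_c (c : ℝ) (hc : c ≠ 0) (h : Real.cos c = 1) :
    ∫ u in (0:ℝ)..1, Real.sin (c * u) = 0 := by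
  rw [intervalIntegral.integral_comp_mul_left Real.sin hc]
  simp [h]

lemma sin_two_pi : Real.sin (2*π) = 0 := by
  have h := Real.sin_int_mul_pi 2; push_cast at h; exact h

lemma sin_four_pi : Real.sin (4*π) = 0 := by
  have h := Real.sin_int_mul_pi 4; push_cast at h; exact h

lemma sin_six_pi : Real.sin (6*π) = 0 := by
  have h := Real.sin_int_mul_pi 6; push_cast at h; exact h

lemma cos_two_pi : Real.cos (2*π) = 1 := by
  have h := Real.cos_int_mul_two_pi 1; push_cast at h; convert h using 2; ring

lemma cos_four_pi : Real.cos (4*π) = 1 := by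
  have h := Real.cos_int_mul_two_pi 2; push_cast at h; convert h using 2; ring

lemma cos_six_pi : Real.cos (6*π) = 1 := by
  have h := Real.cos_int_mul_two_pi 3; push_cast at h; convert h using 2; ring

lemma int_cos1 : ∫ u in (0:ℝ)..1, Real.cos (2*π*u) = 0 :=
  int_cos_c _ (by positivity) sin_two_pi

lemma int_sin1 : ∫ u in (0:ℝ)..1, Real.sin (2*π*u) = 0 :=
  int_sin_c _ (by positivity) cos_two_pi

lemma int_cos2 : ∫ u in (0:ℝ)..1, Real.cos (4*π*u) = 0 :=
  int_cos_c _ (by positivity) sin_four_pi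

lemma int_sin2 : ∫ u in (0:ℝ)..1, Real.sin (4*π*u) = 0 :=
  int_sin_c _ (by positivity) cos_four_pi

lemma int_cos3 : ∫ u in (0:ℝ)..1, Real.cos (6*π*u) = 0 :=
  int_cos_c _ (by positivity) sin_six_pi

lemma int_sin3 : ∫ u in (0:ℝ)..1, Real.sin (6*π*u) = 0 :=
  int_sin_c _ (by positivity) cos_six_pi

lemma cont_lin (c : ℝ) : Continuous (fun u : ℝ => c * u) := continuous_const.mul continuous_id

/-- Master 1D integral: average over `[0,1]` of a cubic trig polynomial in `2πu`. -/
lemma oneD (A B C D E F G H I J : ℝ) :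
    ∫ u in (0:ℝ)..1,
      (A + B * Real.cos (2*π*u) + C * Real.sin (2*π*u)
        + D * Real.cos (2*π*u)^2 + E * (Real.cos (2*π*u) * Real.sin (2*π*u))
        + F * Real.sin (2*π*u)^2
        + G * Real.cos (2*π*u)^3 + H * (Real.cos (2*π*u)^2 * Real.sin (2*π*u))
        + I * (Real.cos (2*π*u) * Real.sin (2*π*u)^2) + J * Real.sin (2*π*u)^3)
    = A + D/2 + F/2 := by
  have key : ∀ u : ℝ,
      (A + B * Real.cos (2*π*u) + C * Real.sin (2*π*u)
        + D * Real.cos (2*π*u)^2 + E * (Real.cos (2*π*u) * Real.sin (2*π*u))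
        + F * Real.sin (2*π*u)^2
        + G * Real.cos (2*π*u)^3 + H * (Real.cos (2*π*u)^2 * Real.sin (2*π*u))
        + I * (Real.cos (2*π*u) * Real.sin (2*π*u)^2) + J * Real.sin (2*π*u)^3)
      = (A + D/2 + F/2)
        + (B + 3*G/4 + I/4) * Real.cos (2*π*u) + (C + H/4 + 3*J/4) * Real.sin (2*π*u)
        + (D/2 - E/2*0 - F/2) * Real.cos (4*π*u) + (E/2) * Real.sin (4*π*u)
        + (G/4 - I/4) * Real.cos (6*π*u) + (H/4 - J/4) * Real.sin (6*π*u) := by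
    intro u
    have e2 : (4:ℝ)*π*u = 2*(2*π*u) := by ring
    have e3 : (6:ℝ)*π*u = 3*(2*π*u) := by ring
    have s1 := Real.sin_sq_add_cos_sq (2*π*u)
    rw [e2, e3, Real.cos_two_mul, Real.sin_two_mul, Real.cos_three_mul, Real.sin_three_mul]
    linear_combination (F + H * Real.sin (2*π*u) + I * Real.cos (2*π*u)) * s1
  rw [intervalIntegral.integral_congr (fun u _ => key u)]
  have c1 : Continuous fun u : ℝ => Real.cos (2*π*u) := Real.continuous_cos.comp (cont_lin _)
  have s1 : Continuous fun u : ℝ => Real.sin (2*π*u) := Real.continuous_sin.comp (cont_lin _)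
  have c2 : Continuous fun u : ℝ => Real.cos (4*π*u) := Real.continuous_cos.comp (cont_lin _)
  have s2 : Continuous fun u : ℝ => Real.sin (4*π*u) := Real.continuous_sin.comp (cont_lin _)
  have c3 : Continuous fun u : ℝ => Real.cos (6*π*u) := Real.continuous_cos.comp (cont_lin _)
  have s3 : Continuous fun u : ℝ => Real.sin (6*π*u) := Real.continuous_sin.comp (cont_lin _)
  have i0 : IntervalIntegrable (fun _ : ℝ => A + D/2 + F/2) MeasureTheory.volume 0 1 :=
    continuous_const.intervalIntegrable 0 1
  have i1 := (continuous_const.mul c1).intervalIntegrable (μ := MeasureTheory.volume) (0:ℝ) 1 (u := fun u => (B + 3*G/4 + I/4) * Real.cos (2*π*u))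
  have i2 := (continuous_const.mul s1).intervalIntegrable (μ := MeasureTheory.volume) (0:ℝ) 1 (u := fun u => (C + H/4 + 3*J/4) * Real.sin (2*π*u))
  have i3 := (continuous_const.mul c2).intervalIntegrable (μ := MeasureTheory.volume) (0:ℝ) 1 (u := fun u => (D/2 - E/2*0 - F/2) * Real.cos (4*π*u))
  have i4 := (continuous_const.mul s2).intervalIntegrable (μ := MeasureTheory.volume) (0:ℝ) 1 (u := fun u => (E/2) * Real.sin (4*π*u))
  have i5 := (continuous_const.mul c3).intervalIntegrable (μ := MeasureTheory.volume) (0:ℝ) 1 (u := fun u => (G/4 - I/4) * Real.cos (6*π*u))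
  have i6 := (continuous_const.mul s3).intervalIntegrable (μ := MeasureTheory.volume) (0:ℝ) 1 (u := fun u => (H/4 - J/4) * Real.sin (6*π*u))
  rw [intervalIntegral.integral_add (((((i0.add i1).add i2).add i3).add i4).add i5) i6,
    intervalIntegral.integral_add ((((i0.add i1).add i2).add i3).add i4) i5,
    intervalIntegral.integral_add (((i0.add i1).add i2).add i3) i4,
    intervalIntegral.integral_add ((i0.add i1).add i2) i3,
    intervalIntegral.integral_add (i0.add i1) i2,
    intervalIntegral.integral_add i0 i1]
  simp only [intervalIntegral.integral_const_mul, int_cos1, int_sin1, int_cos2, int_sin2,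
    int_cos3, int_sin3, mul_zero, add_zero]
  simp

end HexAux
namespace HexAux

lemma dot1 (s t : ℝ) : dotp kvec1 (s • lvec1 + t • lvec2) = 2*π*s := by
  simp only [dotp, Fin.sum_univ_two, Pi.add_apply, Pi.smul_apply, smul_eq_mul,
    k1_0, k1_1, lv1_0, lv1_1, lv2_0, lv2_1]
  ring

lemma dot2 (s t : ℝ) : dotp kvec2 (s • lvec1 + t • lvec2) = 2*π*t := by
  have h3 : Real.sqrt 3 ≠ 0 := ne_of_gt sqrt3_pos
  simp only [dotp, Fin.sum_univ_two, Pi.add_apply, Pi.smul_apply, smul_eq_mul,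
    k2_0, k2_1, lv1_0, lv1_1, lv2_0, lv2_1]
  field_simp
  ring

lemma dot3 (s t : ℝ) : dotp kvec3 (s • lvec1 + t • lvec2) = -(2*π*s + 2*π*t) := by
  have h3 : Real.sqrt 3 ≠ 0 := ne_of_gt sqrt3_pos
  simp only [dotp, Fin.sum_univ_two, Pi.add_apply, Pi.smul_apply, smul_eq_mul,
    k3_0, k3_1, lv1_0, lv1_1, lv2_0, lv2_1]
  field_simp
  ring

lemma cos3_par (s t : ℝ) : Real.cos (dotp kvec3 (s • lvec1 + t • lvec2)) =
    Real.cos (2*π*s) * Real.cos (2*π*t) - Real.sin (2*π*s) * Real.sin (2*π*t) := by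
  rw [dot3, Real.cos_neg, Real.cos_add]

lemma sin3_par (s t : ℝ) : Real.sin (dotp kvec3 (s • lvec1 + t • lvec2)) =
    -(Real.sin (2*π*s) * Real.cos (2*π*t) + Real.cos (2*π*s) * Real.sin (2*π*t)) := by
  rw [dot3, Real.sin_neg, Real.sin_add]

@[fun_prop]
lemma cont_dotp (k : Fin 2 → ℝ) : Continuous (dotp k) := by
  unfold dotp
  exact continuous_finset_sum _ (fun i _ => continuous_const.mul (continuous_apply i))

@[fun_prop]
lemma cont_phiHex : Continuous phiHex := by
  unfold phiHex
  fun_prop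

@[fun_prop]
lemma cont_hessSq : Continuous hessSq := by
  have : hessSq = fun x =>
      (Real.cos (dotp kvec1 x)^2 + Real.cos (dotp kvec2 x)^2 + Real.cos (dotp kvec3 x)^2)
      + (Real.cos (dotp kvec1 x) * Real.cos (dotp kvec2 x)
         + Real.cos (dotp kvec1 x) * Real.cos (dotp kvec3 x)
         + Real.cos (dotp kvec2 x) * Real.cos (dotp kvec3 x)) / 2 := funext hessSq_eq
  rw [this]; fun_prop

@[fun_prop]
lemma cont_thirdSq : Continuous thirdSq := by
  have : thirdSq = fun x =>
      (Real.sin (dotp kvec1 x)^2 + Real.sin (dotp kvec2 x)^2 + Real.sin (dotp kvec3 x)^2)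
      - (Real.sin (dotp kvec1 x) * Real.sin (dotp kvec2 x)
         + Real.sin (dotp kvec1 x) * Real.sin (dotp kvec3 x)
         + Real.sin (dotp kvec2 x) * Real.sin (dotp kvec3 x)) / 4 := funext thirdSq_eq
  rw [this]; fun_prop

@[fun_prop]
lemma cont_trHess3 : Continuous trHess3 := by
  have : trHess3 = fun x =>
      -(Real.cos (dotp kvec1 x)^3 + Real.cos (dotp kvec2 x)^3 + Real.cos (dotp kvec3 x)^3)
      - (3/4) * (Real.cos (dotp kvec1 x)^2 * Real.cos (dotp kvec2 x)
        + Real.cos (dotp kvec1 x)^2 * Real.cos (dotp kvec3 x)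
        + Real.cos (dotp kvec2 x)^2 * Real.cos (dotp kvec1 x)
        + Real.cos (dotp kvec2 x)^2 * Real.cos (dotp kvec3 x)
        + Real.cos (dotp kvec3 x)^2 * Real.cos (dotp kvec1 x)
        + Real.cos (dotp kvec3 x)^2 * Real.cos (dotp kvec2 x))
      + (3/4) * (Real.cos (dotp kvec1 x) * Real.cos (dotp kvec2 x) * Real.cos (dotp kvec3 x)) :=
    funext trHess3_eq
  rw [this]; fun_prop

end HexAux
namespace HexAux

def Ca (s : ℝ) : ℝ := Real.cos (2*π*s)
def Sa (s : ℝ) : ℝ := Real.sin (2*π*s)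

lemma oneD' (A B C D E F G H I J V : ℝ) (f : ℝ → ℝ)
    (hf : ∀ u, f u = A + B * Ca u + C * Sa u + D * Ca u^2 + E * (Ca u * Sa u) + F * Sa u^2
      + G * Ca u^3 + H * (Ca u^2 * Sa u) + I * (Ca u * Sa u^2) + J * Sa u^3)
    (hV : A + D/2 + F/2 = V) :
    ∫ u in (0:ℝ)..1, f u = V := by
  rw [intervalIntegral.integral_congr (fun u _ => hf u)]
  simp only [Ca, Sa]
  rw [oneD, hV]

lemma cos_par1 (s t : ℝ) : Real.cos (dotp kvec1 (s • lvec1 + t • lvec2)) = Ca s := by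
  rw [dot1]; rfl
lemma cos_par2 (s t : ℝ) : Real.cos (dotp kvec2 (s • lvec1 + t • lvec2)) = Ca t := by
  rw [dot2]; rfl
lemma cos_par3 (s t : ℝ) : Real.cos (dotp kvec3 (s • lvec1 + t • lvec2)) =
    Ca s * Ca t - Sa s * Sa t := cos3_par s t
lemma sin_par1 (s t : ℝ) : Real.sin (dotp kvec1 (s • lvec1 + t • lvec2)) = Sa s := by
  rw [dot1]; rfl
lemma sin_par2 (s t : ℝ) : Real.sin (dotp kvec2 (s • lvec1 + t • lvec2)) = Sa t := by
  rw [dot2]; rfl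
lemma sin_par3 (s t : ℝ) : Real.sin (dotp kvec3 (s • lvec1 + t • lvec2)) =
    -(Sa s * Ca t + Ca s * Sa t) := sin3_par s t

/-- `⟨p + qφ + rφ² + wφ³⟩ = p + (3/2)r + (3/2)w`. -/
lemma avg_poly (p q r w : ℝ) :
    haarAvg (fun x => p + q * phiHex x + r * phiHex x ^ 2 + w * phiHex x ^ 3)
      = p + 3/2 * r + 3/2 * w := by
  rw [haar_param _ (by unfold phiHex; fun_prop)]
  refine oneD' (p + r/2) (q + r + 3*w/2) 0 (3/2*r + 3*w) 0 (r/2) (5/2*w) 0 (3/2*w) 0 _ _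
    (fun s => ?_) (by ring)
  refine oneD'
    (p + q*(Ca s) + r*(Ca s)^2 + w*(Ca s)^3)
    (q*(1 + Ca s) + 2*r*(Ca s)*(1 + Ca s) + 3*w*(Ca s)^2*(1 + Ca s))
    (q*(-Sa s) + 2*r*(Ca s)*(-Sa s) + 3*w*(Ca s)^2*(-Sa s))
    (r*(1 + Ca s)^2 + 3*w*(Ca s)*(1 + Ca s)^2)
    (2*r*(1 + Ca s)*(-Sa s) + 6*w*(Ca s)*(1 + Ca s)*(-Sa s))
    (r*(Sa s)^2 + 3*w*(Ca s)*(Sa s)^2)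
    (w*(1 + Ca s)^3)
    (3*w*(1 + Ca s)^2*(-Sa s))
    (3*w*(1 + Ca s)*(Sa s)^2)
    (w*(-(Sa s))^3)
    _ _ (fun t => ?_) (by ring)
  simp only [phiHex, cos_par1, cos_par2, cos_par3]
  ring

/-- `⟨hessSq • (p + qφ)⟩ = (3/2)p + (3/8)q`. -/
lemma avg_hess (p q : ℝ) :
    haarAvg (fun x => hessSq x * (p + q * phiHex x)) = 3/2 * p + 3/8 * q := by
  have hrw : (fun x => hessSq x * (p + q * phiHex x)) = (fun x =>
      ((Real.cos (dotp kvec1 x)^2 + Real.cos (dotp kvec2 x)^2 + Real.cos (dotp kvec3 x)^2)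
      + (Real.cos (dotp kvec1 x) * Real.cos (dotp kvec2 x)
       + Real.cos (dotp kvec1 x) * Real.cos (dotp kvec3 x)
       + Real.cos (dotp kvec2 x) * Real.cos (dotp kvec3 x)) / 2) * (p + q * phiHex x)) := by
    funext x; rw [hessSq_eq]
  rw [hrw, haar_param _ (by unfold phiHex; fun_prop)]
  refine oneD' (p/2) (3*q/4 + p/4) 0 (3/2*p + 3/4*q) 0 (p/2) (7/4*q) 0 (3/4*q) 0 _ _
    (fun s => ?_) (by ring)
  refine oneD'
    ((Ca s)^2 * (p + q*Ca s))
    ((Ca s)^2 * (q*(1 + Ca s)) + ((Ca s + (Ca s)^2)/2) * (p + q*Ca s))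
    ((Ca s)^2 * (-q*Sa s) + (-(Ca s)*(Sa s)/2) * (p + q*Ca s))
    (((Ca s + (Ca s)^2)/2) * (q*(1 + Ca s)) + (1 + (Ca s)^2 + (Ca s)/2) * (p + q*Ca s))
    (((Ca s + (Ca s)^2)/2) * (-q*Sa s) + (-(Ca s)*(Sa s)/2) * (q*(1 + Ca s))
      + (-(2*(Ca s)*(Sa s) + (Sa s)/2)) * (p + q*Ca s))
    ((-(Ca s)*(Sa s)/2) * (-q*Sa s) + (Sa s)^2 * (p + q*Ca s))
    ((1 + (Ca s)^2 + (Ca s)/2) * (q*(1 + Ca s)))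
    ((1 + (Ca s)^2 + (Ca s)/2) * (-q*Sa s) + (-(2*(Ca s)*(Sa s) + (Sa s)/2)) * (q*(1 + Ca s)))
    ((-(2*(Ca s)*(Sa s) + (Sa s)/2)) * (-q*Sa s) + (Sa s)^2 * (q*(1 + Ca s)))
    ((Sa s)^2 * (-q*Sa s))
    _ _ (fun t => ?_) (by ring)
  simp only [phiHex, cos_par1, cos_par2, cos_par3]
  ring

/-- `⟨thirdSq • (p + qφ)⟩ = (3/2)p + (3/16)q`. -/
lemma avg_third (p q : ℝ) :
    haarAvg (fun x => thirdSq x * (p + q * phiHex x)) = 3/2 * p + 3/16 * q := by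
  have hrw : (fun x => thirdSq x * (p + q * phiHex x)) = (fun x =>
      ((Real.sin (dotp kvec1 x)^2 + Real.sin (dotp kvec2 x)^2 + Real.sin (dotp kvec3 x)^2)
      - (Real.sin (dotp kvec1 x) * Real.sin (dotp kvec2 x)
       + Real.sin (dotp kvec1 x) * Real.sin (dotp kvec3 x)
       + Real.sin (dotp kvec2 x) * Real.sin (dotp kvec3 x)) / 4) * (p + q * phiHex x)) := by
    funext x; rw [thirdSq_eq]
  rw [hrw, haar_param _ (by unfold phiHex; fun_prop)]
  refine oneD' (p/2) (q/2 + p/8) 0 (p/2 + q/8) 0 (3/2*p + q/4) (q/2) 0 (3/2*q) 0 _ _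
    (fun s => ?_) (by ring)
  refine oneD'
    ((Sa s)^2 * (p + q*Ca s))
    ((Sa s)^2 * (q*(1 + Ca s)) + ((Sa s)^2/4) * (p + q*Ca s))
    ((Sa s)^2 * (-q*Sa s) + ((Ca s)*(Sa s)/4 - (Sa s)/4) * (p + q*Ca s))
    (((Sa s)^2/4) * (q*(1 + Ca s)) + (Sa s)^2 * (p + q*Ca s))
    (((Sa s)^2/4) * (-q*Sa s) + ((Ca s)*(Sa s)/4 - (Sa s)/4) * (q*(1 + Ca s))
      + (2*(Ca s)*(Sa s) + (Sa s)/4) * (p + q*Ca s))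
    (((Ca s)*(Sa s)/4 - (Sa s)/4) * (-q*Sa s) + (1 + (Ca s)^2 + (Ca s)/4) * (p + q*Ca s))
    ((Sa s)^2 * (q*(1 + Ca s)))
    ((Sa s)^2 * (-q*Sa s) + (2*(Ca s)*(Sa s) + (Sa s)/4) * (q*(1 + Ca s)))
    ((2*(Ca s)*(Sa s) + (Sa s)/4) * (-q*Sa s) + (1 + (Ca s)^2 + (Ca s)/4) * (q*(1 + Ca s)))
    ((1 + (Ca s)^2 + (Ca s)/4) * (-q*Sa s))
    _ _ (fun t => ?_) (by ring)
  simp only [phiHex, cos_par1, cos_par2, cos_par3, sin_par1, sin_par2, sin_par3]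
  ring

/-- `⟨w • trHess3⟩ = (3/16)w`. -/
lemma avg_tr (w : ℝ) :
    haarAvg (fun x => w * trHess3 x) = 3/16 * w := by
  have hrw : (fun x => w * trHess3 x) = (fun x => w *
      (-(Real.cos (dotp kvec1 x)^3 + Real.cos (dotp kvec2 x)^3 + Real.cos (dotp kvec3 x)^3)
      - (3/4) * (Real.cos (dotp kvec1 x)^2 * Real.cos (dotp kvec2 x)
        + Real.cos (dotp kvec1 x)^2 * Real.cos (dotp kvec3 x)
        + Real.cos (dotp kvec2 x)^2 * Real.cos (dotp kvec1 x)
        + Real.cos (dotp kvec2 x)^2 * Real.cos (dotp kvec3 x)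
        + Real.cos (dotp kvec3 x)^2 * Real.cos (dotp kvec1 x)
        + Real.cos (dotp kvec3 x)^2 * Real.cos (dotp kvec2 x))
      + (3/4) * (Real.cos (dotp kvec1 x) * Real.cos (dotp kvec2 x) * Real.cos (dotp kvec3 x)))) := by
    funext x; rw [trHess3_eq]
  rw [hrw, haar_param _ (by fun_prop)]
  refine oneD' 0 (-3*w/8) 0 (3*w/8) 0 0 (-w - 3*w/8) 0 (-3*w/8) 0 _ _
    (fun s => ?_) (by ring)
  refine oneD'
    (w * (-(Ca s)^3))
    (w * (-(3/4)*(Ca s)^2 - (3/4)*(Ca s)^3))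
    (w * ((3/4)*(Ca s)^2*(Sa s)))
    (w * (-(3/4)*(Ca s) - (3/4)*(Ca s)^3 + (3/4)*(Ca s)^2))
    (w * ((3/2)*(Ca s)^2*(Sa s) - (3/4)*(Ca s)*(Sa s)))
    (w * (-(3/4)*(Ca s)*(Sa s)^2))
    (w * (-1 - (Ca s)^3 - (3/4)*(Ca s) - (3/4)*(Ca s)^2))
    (w * (3*(Ca s)^2*(Sa s) + (3/4)*(Sa s) + (3/2)*(Ca s)*(Sa s)))
    (w * (-3*(Ca s)*(Sa s)^2 - (3/4)*(Sa s)^2))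
    (w * (Sa s)^3)
    _ _ (fun t => ?_) (by ring)
  simp only [cos_par1, cos_par2, cos_par3]
  ring

end HexAux
namespace HexAux

lemma integrableOn_omega (g : (Fin 2 → ℝ) → ℝ) (hg : Continuous g) :
    MeasureTheory.IntegrableOn g Omega := by
  set K : Set (Fin 2 → ℝ) := Set.pi Set.univ (fun _ => Set.Icc (0:ℝ) 1) with hK
  have hKc : IsCompact K := isCompact_univ_pi (fun _ => isCompact_Icc)
  have hKA : IsCompact (Amap '' K) := hKc.image Amap.continuous
  have hsub : Omega ⊆ Amap '' K := by
    rw [Omega_eq]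
    apply Set.image_mono
    rintro y ⟨⟨h00, h01⟩, h10, h11⟩
    intro i _
    fin_cases i
    · exact ⟨h00, le_of_lt h01⟩
    · exact ⟨h10, le_of_lt h11⟩
  exact (hg.continuousOn.integrableOn_compact hKA).mono_set hsub

lemma haar_add (f g : (Fin 2 → ℝ) → ℝ) (hf : Continuous f) (hg : Continuous g) :
    haarAvg (fun x => f x + g x) = haarAvg f + haarAvg g := by
  unfold haarAvg
  rw [MeasureTheory.integral_add (integrableOn_omega f hf) (integrableOn_omega g hg)]
  ring

lemma haar_abs_le (g : (Fin 2 → ℝ) → ℝ) (hg : Continuous g) (M : ℝ)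
    (hM : ∀ x, |g x| ≤ M) : |haarAvg g| ≤ M := by
  rw [haar_param g hg]
  have h1 : ∀ s ∈ Set.uIoc (0:ℝ) 1,
      ‖∫ t in (0:ℝ)..1, g (s • lvec1 + t • lvec2)‖ ≤ M := by
    intro s _
    have := intervalIntegral.norm_integral_le_of_norm_le_const
      (C := M) (f := fun t => g (s • lvec1 + t • lvec2)) (a := 0) (b := 1)
      (fun t _ => by rw [Real.norm_eq_abs]; exact hM _)
    simpa using this
  have := intervalIntegral.norm_integral_le_of_norm_le_const h1
  rw [Real.norm_eq_abs] at this
  simpa using this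

lemma abs_phi_le (x : Fin 2 → ℝ) : |phiHex x| ≤ 3 := by
  unfold phiHex
  calc |Real.cos (dotp kvec1 x) + Real.cos (dotp kvec2 x) + Real.cos (dotp kvec3 x)|
      ≤ |Real.cos (dotp kvec1 x) + Real.cos (dotp kvec2 x)| + |Real.cos (dotp kvec3 x)| :=
        abs_add_le _ _
    _ ≤ |Real.cos (dotp kvec1 x)| + |Real.cos (dotp kvec2 x)| + |Real.cos (dotp kvec3 x)| := by
        linarith [abs_add_le (Real.cos (dotp kvec1 x)) (Real.cos (dotp kvec2 x))]
    _ ≤ 3 := by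
        linarith [Real.abs_cos_le_one (dotp kvec1 x), Real.abs_cos_le_one (dotp kvec2 x),
          Real.abs_cos_le_one (dotp kvec3 x)]

lemma abs_hessSq_le (x : Fin 2 → ℝ) : |hessSq x| ≤ 5 := by
  rw [hessSq_eq]
  have h1 := Real.abs_cos_le_one (dotp kvec1 x)
  have h2 := Real.abs_cos_le_one (dotp kvec2 x)
  have h3 := Real.abs_cos_le_one (dotp kvec3 x)
  rw [abs_le] at *
  constructor <;> nlinarith [h1.1, h1.2, h2.1, h2.2, h3.1, h3.2]

lemma abs_thirdSq_le (x : Fin 2 → ℝ) : |thirdSq x| ≤ 4 := by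
  rw [thirdSq_eq]
  have h1 := Real.abs_sin_le_one (dotp kvec1 x)
  have h2 := Real.abs_sin_le_one (dotp kvec2 x)
  have h3 := Real.abs_sin_le_one (dotp kvec3 x)
  rw [abs_le] at *
  constructor <;> nlinarith [h1.1, h1.2, h2.1, h2.2, h3.1, h3.2]

lemma abs_trHess3_le (x : Fin 2 → ℝ) : |trHess3 x| ≤ 9 := by
  rw [trHess3_eq]
  set c1 := Real.cos (dotp kvec1 x)
  set c2 := Real.cos (dotp kvec2 x)
  set c3 := Real.cos (dotp kvec3 x)
  have h1 := Real.abs_cos_le_one (dotp kvec1 x)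
  have h2 := Real.abs_cos_le_one (dotp kvec2 x)
  have h3 := Real.abs_cos_le_one (dotp kvec3 x)
  have hm : ∀ u v w : ℝ, |u| ≤ 1 → |v| ≤ 1 → |w| ≤ 1 → |u * v * w| ≤ 1 := by
    intro u v w hu hv hw
    rw [abs_mul, abs_mul]
    have h0u := abs_nonneg u
    have h0v := abs_nonneg v
    have h0w := abs_nonneg w
    calc |u| * |v| * |w| ≤ 1 * 1 * 1 := by
          apply mul_le_mul (mul_le_mul hu hv h0v (by norm_num)) hw h0w (by norm_num)
      _ = 1 := by norm_num
  have e1 : ∀ u : ℝ, (u:ℝ)^3 = u * u * u := by intro u; ring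
  have e2 : ∀ u v : ℝ, u^2 * v = u * u * v := by intro u v; ring
  have m111 := hm c1 c1 c1 h1 h1 h1
  have m222 := hm c2 c2 c2 h2 h2 h2
  have m333 := hm c3 c3 c3 h3 h3 h3
  have m112 := hm c1 c1 c2 h1 h1 h2
  have m113 := hm c1 c1 c3 h1 h1 h3
  have m221 := hm c2 c2 c1 h2 h2 h1
  have m223 := hm c2 c2 c3 h2 h2 h3
  have m331 := hm c3 c3 c1 h3 h3 h1
  have m332 := hm c3 c3 c2 h3 h3 h2
  have m123 := hm c1 c2 c3 h1 h2 h3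
  rw [abs_le] at m111 m222 m333 m112 m113 m221 m223 m331 m332 m123 ⊢
  constructor <;> rw [e1 c1, e1 c2, e1 c3, e2 c1 c2, e2 c1 c3, e2 c2 c1, e2 c2 c3, e2 c3 c1, e2 c3 c2] <;>
    [linarith [m111.1, m222.1, m333.1, m112.1, m112.2, m113.1, m113.2, m221.1, m221.2, m223.1, m223.2, m331.1, m331.2, m332.1, m332.2, m123.1, m123.2];
     linarith [m111.2, m222.2, m333.2, m112.1, m112.2, m113.1, m113.2, m221.1, m221.2, m223.1, m223.2, m331.1, m331.2, m332.1, m332.2, m123.1, m123.2]]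

end HexAux
namespace HexAux

lemma exp_r0 {u : ℝ} (h : |u| ≤ 1) : |Real.exp u - 1| ≤ 2 * |u| := by
  have hb := Real.exp_bound h (by norm_num : 0 < 1)
  simp [Finset.sum_range_succ, Nat.factorial] at hb
  linarith [hb]

lemma exp_r1 {u : ℝ} (h : |u| ≤ 1) : |Real.exp u - (1 + u)| ≤ u^2 := by
  have hb := Real.exp_bound h (by norm_num : 0 < 2)
  have hs : ∑ m ∈ Finset.range 2, u ^ m / m.factorial = 1 + u := by
    simp [Finset.sum_range_succ, Nat.factorial]
  rw [hs] at hb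
  norm_num [Nat.factorial] at hb
  have h2 : |u|^2 = u^2 := sq_abs u
  nlinarith [hb, sq_nonneg u]

lemma exp_r2 {u : ℝ} (h : |u| ≤ 1) : |Real.exp u - (1 + u + u^2/2)| ≤ |u|^3 := by
  have hb := Real.exp_bound h (by norm_num : 0 < 3)
  have hs : ∑ m ∈ Finset.range 3, u ^ m / m.factorial = 1 + u + u^2/2 := by
    norm_num [Finset.sum_range_succ, Nat.factorial]
  rw [hs] at hb
  norm_num [Nat.factorial] at hb
  have h3 : (0:ℝ) ≤ |u|^3 := by positivity
  nlinarith [hb]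

lemma abs_eps4 (ε : ℝ) : |ε|^4 = ε^4 := by
  rw [← abs_pow]; exact abs_of_nonneg (by positivity)

lemma abs_u_le {ε : ℝ} (x : Fin 2 → ℝ) : |ε * phiHex x| ≤ 3 * |ε| := by
  rw [abs_mul]
  calc |ε| * |phiHex x| ≤ |ε| * 3 := by
        exact mul_le_mul_of_nonneg_left (abs_phi_le x) (abs_nonneg ε)
    _ = 3 * |ε| := by ring

lemma abs_u_le_one {ε : ℝ} (hε : |ε| ≤ 1/5) (x : Fin 2 → ℝ) : |ε * phiHex x| ≤ 1 := by
  calc |ε * phiHex x| ≤ 3 * |ε| := abs_u_le x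
    _ ≤ 3 * (1/5) := by linarith
    _ ≤ 1 := by norm_num

/-- Z estimate. -/
lemma Z_est {ε : ℝ} (hε : |ε| ≤ 1/5) : |Zt ε - 1| ≤ 9 * ε^2 := by
  have hsplit : (fun x => Real.exp (ε * phiHex x)) = fun x =>
      ((1:ℝ) + ε * phiHex x + 0 * phiHex x ^ 2 + 0 * phiHex x ^ 3)
      + (Real.exp (ε * phiHex x) - (1 + ε * phiHex x)) := funext fun x => by ring
  rw [Zt, hsplit, haar_add _ _ (by fun_prop) (by fun_prop), avg_poly]
  have herr : |haarAvg (fun x => Real.exp (ε * phiHex x) - (1 + ε * phiHex x))| ≤ 9 * ε^2 := by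
    apply haar_abs_le _ (by fun_prop)
    intro x
    calc |Real.exp (ε * phiHex x) - (1 + ε * phiHex x)| ≤ (ε * phiHex x)^2 :=
          exp_r1 (abs_u_le_one hε x)
      _ = (|ε| * |phiHex x|)^2 := by rw [← abs_mul, sq_abs]
      _ ≤ (|ε| * 3)^2 := by
          apply pow_le_pow_left₀ (by positivity)
          exact mul_le_mul_of_nonneg_left (abs_phi_le x) (abs_nonneg ε)
      _ = 9 * |ε|^2 := by ring
      _ = 9 * ε^2 := by rw [sq_abs]
  have h0 : (1:ℝ) + 3/2 * 0 + 3/2 * 0 = 1 := by norm_num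
  rw [h0, add_sub_cancel_left]
  exact herr

lemma Z_low {ε : ℝ} (hε : |ε| ≤ 1/5) : 1/2 ≤ Zt ε := by
  have h := Z_est hε
  have h2 : ε^2 ≤ 1/25 := by
    have := mul_le_mul hε hε (abs_nonneg ε) (by norm_num)
    nlinarith [sq_abs ε]
  rw [abs_le] at h
  nlinarith [h.1]

/-- Numerator estimate for 𝓘. -/
lemma NI_est {ε : ℝ} (hε : |ε| ≤ 1/5) :
    |haarAvg (fun x => ε * phiHex x * Real.exp (ε * phiHex x))
      - ((3/2) * ε^2 + (3/4) * ε^3)| ≤ 81 * ε^4 := by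
  have hsplit : (fun x => ε * phiHex x * Real.exp (ε * phiHex x)) = fun x =>
      ((0:ℝ) + ε * phiHex x + ε^2 * phiHex x ^ 2 + (ε^3/2) * phiHex x ^ 3)
      + (ε * phiHex x * (Real.exp (ε * phiHex x)
          - (1 + ε * phiHex x + (ε * phiHex x)^2/2))) := funext fun x => by ring
  rw [hsplit, haar_add _ _ (by fun_prop) (by fun_prop), avg_poly]
  have herr : |haarAvg (fun x => ε * phiHex x * (Real.exp (ε * phiHex x)
      - (1 + ε * phiHex x + (ε * phiHex x)^2/2)))| ≤ 81 * ε^4 := by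
    apply haar_abs_le _ (by fun_prop)
    intro x
    rw [abs_mul]
    calc |ε * phiHex x| * |Real.exp (ε * phiHex x) - (1 + ε * phiHex x + (ε * phiHex x)^2/2)|
        ≤ (3*|ε|) * |ε * phiHex x|^3 := by
          apply mul_le_mul (abs_u_le x) (exp_r2 (abs_u_le_one hε x)) (abs_nonneg _) (by positivity)
      _ ≤ (3*|ε|) * (3*|ε|)^3 := by
          apply mul_le_mul_of_nonneg_left _ (by positivity)
          exact pow_le_pow_left₀ (abs_nonneg _) (abs_u_le x) 3
      _ = 81 * |ε|^4 := by ring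
      _ = 81 * ε^4 := by rw [abs_eps4]
  have h0 : (0:ℝ) + 3/2 * ε^2 + 3/2 * (ε^3/2) = (3/2) * ε^2 + (3/4) * ε^3 := by ring
  rw [h0, add_sub_cancel_left]
  exact herr

end HexAux
namespace HexAux

lemma exp_err1_bound {ε : ℝ} (hε : |ε| ≤ 1/5) (x : Fin 2 → ℝ) :
    |Real.exp (ε * phiHex x) - (1 + ε * phiHex x)| ≤ 9 * ε^2 := by
  calc |Real.exp (ε * phiHex x) - (1 + ε * phiHex x)| ≤ (ε * phiHex x)^2 :=
        exp_r1 (abs_u_le_one hε x)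
    _ = (|ε| * |phiHex x|)^2 := by rw [← abs_mul, sq_abs]
    _ ≤ (|ε| * 3)^2 := by
        apply pow_le_pow_left₀ (by positivity)
        exact mul_le_mul_of_nonneg_left (abs_phi_le x) (abs_nonneg ε)
    _ = 9 * |ε|^2 := by ring
    _ = 9 * ε^2 := by rw [sq_abs]

/-- Numerator estimate for 𝓠. -/
lemma NQ_est {ε : ℝ} (hε : |ε| ≤ 1/5) :
    |haarAvg (fun x => ε^2 * hessSq x * Real.exp (ε * phiHex x))
      - ((3/2) * ε^2 + (3/8) * ε^3)| ≤ 45 * ε^4 := by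
  have hsplit : (fun x => ε^2 * hessSq x * Real.exp (ε * phiHex x)) = fun x =>
      (hessSq x * (ε^2 + ε^3 * phiHex x))
      + (ε^2 * hessSq x * (Real.exp (ε * phiHex x) - (1 + ε * phiHex x))) :=
    funext fun x => by ring
  rw [hsplit, haar_add _ _ (by fun_prop) (by fun_prop), avg_hess]
  have herr : |haarAvg (fun x => ε^2 * hessSq x
      * (Real.exp (ε * phiHex x) - (1 + ε * phiHex x)))| ≤ 45 * ε^4 := by
    apply haar_abs_le _ (by fun_prop)
    intro x
    rw [abs_mul, abs_mul, abs_of_nonneg (sq_nonneg ε)]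
    calc ε^2 * |hessSq x| * |Real.exp (ε * phiHex x) - (1 + ε * phiHex x)|
        ≤ ε^2 * 5 * (9 * ε^2) := by
          apply mul_le_mul (mul_le_mul_of_nonneg_left (abs_hessSq_le x) (sq_nonneg ε))
            (exp_err1_bound hε x) (abs_nonneg _) (by positivity)
      _ = 45 * ε^4 := by ring
  have h0 : (3:ℝ)/2 * ε^2 + 3/8 * ε^3 = (3/2) * ε^2 + (3/8) * ε^3 := by ring
  rw [h0, add_sub_cancel_left]
  exact herr

/-- Numerator estimate for 𝓓. -/
lemma ND_est {ε : ℝ} (hε : |ε| ≤ 1/5) :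
    |haarAvg (fun x => (ε^2 * thirdSq x - 2 * ε^3 * trHess3 x) * Real.exp (ε * phiHex x))
      - ((3/2) * ε^2 - (3/16) * ε^3)| ≤ 144 * ε^4 := by
  have hsplit : (fun x => (ε^2 * thirdSq x - 2 * ε^3 * trHess3 x) * Real.exp (ε * phiHex x))
      = fun x =>
      ((thirdSq x * (ε^2 + ε^3 * phiHex x)) + (-2*ε^3) * trHess3 x)
      + (ε^2 * thirdSq x * (Real.exp (ε * phiHex x) - (1 + ε * phiHex x))
         - 2*ε^3 * trHess3 x * (Real.exp (ε * phiHex x) - 1)) :=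
    funext fun x => by ring
  rw [hsplit, haar_add _ _ (by fun_prop) (by fun_prop),
    haar_add _ _ (by fun_prop) (by fun_prop), avg_third, avg_tr]
  have herr : |haarAvg (fun x =>
      ε^2 * thirdSq x * (Real.exp (ε * phiHex x) - (1 + ε * phiHex x))
      - 2*ε^3 * trHess3 x * (Real.exp (ε * phiHex x) - 1))| ≤ 144 * ε^4 := by
    apply haar_abs_le _ (by fun_prop)
    intro x
    have h1 : |ε^2 * thirdSq x * (Real.exp (ε * phiHex x) - (1 + ε * phiHex x))| ≤ 36 * ε^4 := by
      rw [abs_mul, abs_mul, abs_of_nonneg (sq_nonneg ε)]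
      calc ε^2 * |thirdSq x| * |Real.exp (ε * phiHex x) - (1 + ε * phiHex x)|
          ≤ ε^2 * 4 * (9 * ε^2) := by
            apply mul_le_mul (mul_le_mul_of_nonneg_left (abs_thirdSq_le x) (sq_nonneg ε))
              (exp_err1_bound hε x) (abs_nonneg _) (by positivity)
        _ = 36 * ε^4 := by ring
    have h2 : |2*ε^3 * trHess3 x * (Real.exp (ε * phiHex x) - 1)| ≤ 108 * ε^4 := by
      rw [abs_mul, abs_mul]
      have he3 : |2*ε^3| = 2 * |ε|^3 := by rw [abs_mul, abs_pow]; norm_num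
      rw [he3]
      have hexp : |Real.exp (ε * phiHex x) - 1| ≤ 6 * |ε| := by
        calc |Real.exp (ε * phiHex x) - 1| ≤ 2 * |ε * phiHex x| := exp_r0 (abs_u_le_one hε x)
          _ ≤ 2 * (3 * |ε|) := by linarith [abs_u_le (ε := ε) x]
          _ = 6 * |ε| := by ring
      calc 2 * |ε|^3 * |trHess3 x| * |Real.exp (ε * phiHex x) - 1|
          ≤ 2 * |ε|^3 * 9 * (6 * |ε|) := by
            apply mul_le_mul (mul_le_mul_of_nonneg_left (abs_trHess3_le x) (by positivity))
              hexp (abs_nonneg _) (by positivity)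
        _ = 108 * |ε|^4 := by ring
        _ = 108 * ε^4 := by rw [abs_eps4]
    calc |ε^2 * thirdSq x * (Real.exp (ε * phiHex x) - (1 + ε * phiHex x))
        - 2*ε^3 * trHess3 x * (Real.exp (ε * phiHex x) - 1)|
        ≤ |ε^2 * thirdSq x * (Real.exp (ε * phiHex x) - (1 + ε * phiHex x))|
          + |2*ε^3 * trHess3 x * (Real.exp (ε * phiHex x) - 1)| := abs_sub _ _
      _ ≤ 144 * ε^4 := by linarith
  have h0 : (3:ℝ)/2 * ε^2 + 3/16 * ε^3 + 3/16 * (-2*ε^3) = (3/2) * ε^2 - (3/16) * ε^3 := by ring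
  rw [h0, add_sub_cancel_left]
  exact herr

lemma ratio_est {N Z p a b c : ℝ} (hZlow : 1/2 ≤ Z) (hN : |N - p| ≤ a)
    (hZ1 : |Z - 1| ≤ b) (hp : |p| ≤ c) : |N/Z - p| ≤ 2*(a + c*b) := by
  have hZ0 : Z ≠ 0 := by linarith
  have key : N/Z - p = (N - p*Z)/Z := by field_simp
  rw [key, abs_div]
  have h1 : |N - p*Z| ≤ a + c*b := by
    have hh : N - p*Z = (N - p) - p*(Z - 1) := by ring
    rw [hh]
    calc |(N-p) - p*(Z-1)| ≤ |N-p| + |p*(Z-1)| := abs_sub _ _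
      _ ≤ a + c*b := by
          rw [abs_mul]
          have := mul_le_mul hp hZ1 (abs_nonneg _) (le_trans (abs_nonneg p) hp)
          linarith
  have hZabs : 1/2 ≤ |Z| := le_trans hZlow (le_abs_self Z)
  calc |N - p*Z| / |Z| ≤ (a + c*b) / (1/2) :=
        div_le_div₀ (le_trans (abs_nonneg _) h1) h1 (by norm_num) hZabs
    _ = 2*(a + c*b) := by ring

end HexAux
/-- Expansions `𝓘(ε) = (3/2)ε² + (3/4)ε³ + O(ε⁴)`, `𝓠(ε) = (3/2)ε² + (3/8)ε³ + O(ε⁴)`,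
`𝓓(ε) = (3/2)ε² − (3/16)ε³ + O(ε⁴)` as `ε → 0`. -/
theorem torus_functional_expansions :
    ∃ C > (0:ℝ), ∃ ε₀ > (0:ℝ), ∀ ε : ℝ, |ε| ≤ ε₀ →
      |calIT ε - ((3/2) * ε ^ 2 + (3/4) * ε ^ 3)| ≤ C * ε ^ 4 ∧
      |calQT ε - ((3/2) * ε ^ 2 + (3/8) * ε ^ 3)| ≤ C * ε ^ 4 ∧
      |calDT ε - ((3/2) * ε ^ 2 - (3/16) * ε ^ 3)| ≤ C * ε ^ 4 := by
  refine ⟨400, by norm_num, 1/5, by norm_num, fun ε hε => ?_⟩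
  have hZl := HexAux.Z_low hε
  have hZe := HexAux.Z_est hε
  have h4 : (0:ℝ) ≤ ε^4 := by positivity
  have he3 : |ε^3| ≤ (1/5) * ε^2 := by
    have h1 : |ε^3| = ε^2 * |ε| := by
      rw [abs_pow, pow_succ, sq_abs]
    rw [h1]
    calc ε^2 * |ε| ≤ ε^2 * (1/5) := mul_le_mul_of_nonneg_left hε (sq_nonneg ε)
      _ = (1/5) * ε^2 := by ring
  have habs3 : ∀ k : ℝ, 0 ≤ k → |k * ε^3| ≤ k * ((1/5) * ε^2) := by
    intro k hk
    rw [abs_mul, abs_of_nonneg hk]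
    exact mul_le_mul_of_nonneg_left he3 hk
  have hpI : |(3/2) * ε^2 + (3/4) * ε^3| ≤ 2 * ε^2 := by
    calc |(3/2) * ε^2 + (3/4) * ε^3| ≤ |(3/2) * ε^2| + |(3/4) * ε^3| := abs_add_le _ _
      _ ≤ (3/2) * ε^2 + (3/4) * ((1/5) * ε^2) := by
          rw [abs_mul, abs_of_nonneg (sq_nonneg ε), abs_of_nonneg (by norm_num : (0:ℝ) ≤ 3/2)]
          linarith [habs3 (3/4) (by norm_num)]
      _ ≤ 2 * ε^2 := by nlinarith [sq_nonneg ε]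
  have hpQ : |(3/2) * ε^2 + (3/8) * ε^3| ≤ 2 * ε^2 := by
    calc |(3/2) * ε^2 + (3/8) * ε^3| ≤ |(3/2) * ε^2| + |(3/8) * ε^3| := abs_add_le _ _
      _ ≤ (3/2) * ε^2 + (3/8) * ((1/5) * ε^2) := by
          rw [abs_mul, abs_of_nonneg (sq_nonneg ε), abs_of_nonneg (by norm_num : (0:ℝ) ≤ 3/2)]
          linarith [habs3 (3/8) (by norm_num)]
      _ ≤ 2 * ε^2 := by nlinarith [sq_nonneg ε]
  have hpD : |(3/2) * ε^2 - (3/16) * ε^3| ≤ 2 * ε^2 := by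
    calc |(3/2) * ε^2 - (3/16) * ε^3| ≤ |(3/2) * ε^2| + |(3/16) * ε^3| := abs_sub _ _
      _ ≤ (3/2) * ε^2 + (3/16) * ((1/5) * ε^2) := by
          rw [abs_mul, abs_of_nonneg (sq_nonneg ε), abs_of_nonneg (by norm_num : (0:ℝ) ≤ 3/2)]
          linarith [habs3 (3/16) (by norm_num)]
      _ ≤ 2 * ε^2 := by nlinarith [sq_nonneg ε]
  refine ⟨?_, ?_, ?_⟩
  · have hmain := HexAux.ratio_est hZl (HexAux.NI_est hε) hZe hpI
    unfold calIT
    have heq : 2*(81 * ε^4 + 2 * ε^2 * (9 * ε^2)) = 198 * ε^4 := by ring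
    rw [heq] at hmain
    calc |haarAvg (fun x => ε * phiHex x * Real.exp (ε * phiHex x)) / Zt ε
        - ((3/2) * ε ^ 2 + (3/4) * ε ^ 3)| ≤ 198 * ε^4 := hmain
      _ ≤ 400 * ε ^ 4 := by linarith
  · have hmain := HexAux.ratio_est hZl (HexAux.NQ_est hε) hZe hpQ
    unfold calQT
    have heq : 2*(45 * ε^4 + 2 * ε^2 * (9 * ε^2)) = 126 * ε^4 := by ring
    rw [heq] at hmain
    calc |haarAvg (fun x => ε ^ 2 * hessSq x * Real.exp (ε * phiHex x)) / Zt ε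
        - ((3/2) * ε ^ 2 + (3/8) * ε ^ 3)| ≤ 126 * ε^4 := hmain
      _ ≤ 400 * ε ^ 4 := by linarith
  · have hmain := HexAux.ratio_est hZl (HexAux.ND_est hε) hZe hpD
    unfold calDT
    have heq : 2*(144 * ε^4 + 2 * ε^2 * (9 * ε^2)) = 324 * ε^4 := by ring
    rw [heq] at hmain
    calc |haarAvg (fun x => (ε ^ 2 * thirdSq x - 2 * ε ^ 3 * trHess3 x)
          * Real.exp (ε * phiHex x)) / Zt ε
        - ((3/2) * ε ^ 2 - (3/16) * ε ^ 3)| ≤ 324 * ε^4 := hmain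
      _ ≤ 400 * ε ^ 4 := by linarith
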